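/- Let $k,d \in \mathbb{N}$ with $k<d$, let $\gamma = (\gamma_0,\ldots,\gamma_{2d}) \in \mathbb{R}^{2d+1}$ with moment matrix $M_d$, let $x_1,\ldots,x_k$ be distinct real numbers with $f(x) = \prod_{i=1}^k (x-x_i) = \sum_{i=0}^k (-1)^i e_i x^{k-i}$, and let $B_k$ be the matrix with entries $(B_k)_{ij} = (-1)^{k+i-j} e_{k+i-j}$ for $i \le j \le i+k$ and $0$ otherwise. Then $B_k M_d B_k^T = \sum_{i=0}^{k} (-1)^i e_i\, \mathcal{H}_{x^{k-i} f(x)}(d-k)$, where $\mathcal{H}_{g}(\ell)$ is the $(\ell+1)\times(\ell+1)$ localizing moment matrix with entries $L(g(x)\, x^{i+j-2})$. -/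

import Mathlib

open Polynomial

/-- `m`-th elementary symmetric polynomial of `x 1, ..., x k` (1-based indices). -/
noncomputable def esymm (k m : ℕ) (x : ℕ → ℝ) : ℝ :=
  ∑ t ∈ (Finset.Icc 1 k).powersetCard m, ∏ i ∈ t, x i

/-- The Riesz functional of a sequence `γ`: it sends `x^m ↦ γ m`. -/
noncomputable def riesz (γ : ℕ → ℝ) (p : Polynomial ℝ) : ℝ :=
  ∑ m ∈ p.support, p.coeff m * γ m

/-- The matrix `B_k` (1-based encoding). -/
noncomputable def Bmat (k : ℕ) (x : ℕ → ℝ) : ℕ → ℕ → ℝ :=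
  fun i j =>
    if i ≤ j ∧ j ≤ i + k then (-1 : ℝ) ^ (k + i - j) * esymm k (k + i - j) x
    else 0

/-- The localizing moment matrix `H_g(ℓ)` of `γ`, with (1-based) entries
`L(g(x) x^{i+j-2})` for `1 ≤ i, j ≤ ℓ + 1`. -/
noncomputable def locMat (γ : ℕ → ℝ) (g : Polynomial ℝ) : ℕ → ℕ → ℝ :=
  fun i j => riesz γ (g * X ^ (i + j - 2))

lemma riesz_eq_range (γ : ℕ → ℝ) (p : Polynomial ℝ) (N : ℕ) (h : p.natDegree < N) :
    riesz γ p = ∑ m ∈ Finset.range N, p.coeff m * γ m := by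
  unfold riesz
  apply Finset.sum_subset
  · exact fun m hm => Finset.mem_range.mpr (lt_of_le_of_lt (le_natDegree_of_mem_supp _ hm) h)
  · intro m _ hm
    simp [Polynomial.notMem_support_iff.mp hm]

lemma riesz_C_mul_X_pow (γ : ℕ → ℝ) (c : ℝ) (n : ℕ) :
    riesz γ (C c * X ^ n) = c * γ n := by
  rw [riesz_eq_range γ _ (n+1) (lt_of_le_of_lt (natDegree_C_mul_X_pow_le c n) (Nat.lt_succ_self n))]
  simp [coeff_C_mul, coeff_X_pow, ite_mul, Finset.sum_ite_eq']

lemma coeff_prod' (k : ℕ) (x : ℕ → ℝ) (m : ℕ) (hm : m ≤ k) :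
    (∏ i ∈ Finset.Icc 1 k, (X - C (x i))).coeff m
      = (-1 : ℝ) ^ (k - m) * esymm k (k - m) x := by
  have hcard : Multiset.card ((Finset.Icc 1 k).val.map x) = k := by
    simp [Nat.card_Icc]
  have h1 : (∏ i ∈ Finset.Icc 1 k, (X - C (x i)))
      = (((Finset.Icc 1 k).val.map x).map fun t => X - C t).prod := by
    rw [Multiset.map_map, Finset.prod]
    rfl
  rw [h1, Multiset.prod_X_sub_C_coeff _ (by rw [hcard]; exact hm), hcard,
    Finset.esymm_map_val]
  rfl

lemma riesz_add (γ : ℕ → ℝ) (p q : Polynomial ℝ) :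
    riesz γ (p + q) = riesz γ p + riesz γ q := by
  set N := max p.natDegree q.natDegree + 1 with hN
  have hp : p.natDegree < N := by omega
  have hq : q.natDegree < N := by omega
  have hpq : (p + q).natDegree < N :=
    lt_of_le_of_lt (natDegree_add_le p q) (by omega)
  rw [riesz_eq_range γ _ N hp, riesz_eq_range γ _ N hq, riesz_eq_range γ _ N hpq,
    ← Finset.sum_add_distrib]
  exact Finset.sum_congr rfl fun m _ => by rw [coeff_add]; ring

lemma riesz_finset_sum {α : Type*} (γ : ℕ → ℝ) (S : Finset α) (p : α → Polynomial ℝ) :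
    riesz γ (∑ s ∈ S, p s) = ∑ s ∈ S, riesz γ (p s) := by
  classical
  induction S using Finset.induction with
  | empty => simp [riesz]
  | insert a S h ih => rw [Finset.sum_insert h, Finset.sum_insert h, riesz_add, ih]

lemma sum_Icc_shift (F : ℕ → ℝ) (i k : ℕ) :
    ∑ l ∈ Finset.Icc i (i + k), F l = ∑ a ∈ Finset.range (k + 1), F (i + a) := by
  rw [← Finset.Ico_add_one_right_eq_Icc, Finset.sum_Ico_eq_sum_range]
  have h : i + k + 1 - i = k + 1 := by omega
  rw [h]

/-- Entrywise statement of `B_k M_d B_kᵀ = ∑_{i=0}^{k} (-1)^i e_i H_{x^{k-i} f}(d-k)`. -/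
theorem stmt_3 (k d : ℕ) (hk : 1 ≤ k) (hkd : k < d) (γ : ℕ → ℝ) (x : ℕ → ℝ)
    (hdist : Set.InjOn x (Set.Icc 1 k))
    (f : Polynomial ℝ) (hf : f = ∏ i ∈ Finset.Icc 1 k, (X - C (x i)))
    (i j : ℕ) (hi1 : 1 ≤ i) (hi2 : i ≤ d - k + 1) (hj1 : 1 ≤ j) (hj2 : j ≤ d - k + 1) :
    (∑ l ∈ Finset.Icc 1 (d + 1), ∑ l' ∈ Finset.Icc 1 (d + 1),
        Bmat k x i l * γ (l + l' - 2) * Bmat k x j l') =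
      ∑ m ∈ Finset.range (k + 1),
        (-1 : ℝ) ^ m * esymm k m x * locMat γ (X ^ (k - m) * f) i j := by
  have hcoeff : ∀ m ≤ k, f.coeff m = (-1 : ℝ) ^ (k - m) * esymm k (k - m) x := by
    intro m hm; rw [hf]; exact coeff_prod' k x m hm
  have hdeg : f.natDegree = k := by
    rw [hf, natDegree_prod _ _ (fun i _ => X_sub_C_ne_zero (x i))]
    simp [Nat.card_Icc]
  have hfsum : f = ∑ a ∈ Finset.range (k + 1), C (f.coeff a) * X ^ a := by
    conv_lhs => rw [f.as_sum_range' (k + 1) (by omega)]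
    simp_rw [← C_mul_X_pow_eq_monomial]
  have hB : ∀ i l : ℕ, i ≤ l → l ≤ i + k → Bmat k x i l = f.coeff (l - i) := by
    intro i l h1 h2
    have h3 : k + i - l = k - (l - i) := by omega
    rw [Bmat, if_pos ⟨h1, h2⟩, h3, ← hcoeff (l - i) (by omega)]
  -- localize matrix entries
  have hloc : ∀ m, locMat γ (X ^ (k - m) * f) i j
      = ∑ b ∈ Finset.range (k + 1), f.coeff b * γ ((k - m) + b + (i + j - 2)) := by
    intro m
    unfold locMat
    conv_lhs => rw [hfsum]
    rw [Finset.mul_sum, Finset.sum_mul, riesz_finset_sum]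
    refine Finset.sum_congr rfl fun b _ => ?_
    have : X ^ (k - m) * (C (f.coeff b) * X ^ b) * X ^ (i + j - 2)
        = C (f.coeff b) * X ^ ((k - m) + b + (i + j - 2)) := by ring
    rw [this, riesz_C_mul_X_pow]
  -- shrink outer sum
  have hik : i + k ≤ d + 1 := by omega
  have hjk : j + k ≤ d + 1 := by omega
  have hsubi : Finset.Icc i (i + k) ⊆ Finset.Icc 1 (d + 1) := by
    intro l hl; simp only [Finset.mem_Icc] at *; omega
  have hsubj : Finset.Icc j (j + k) ⊆ Finset.Icc 1 (d + 1) := by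
    intro l hl; simp only [Finset.mem_Icc] at *; omega
  rw [← Finset.sum_subset hsubi (fun l _ hl => by
    have : Bmat k x i l = 0 := by
      rw [Bmat, if_neg]; simp only [Finset.mem_Icc] at hl; omega
    simp [this])]
  have inner : ∀ l : ℕ, (∑ l' ∈ Finset.Icc 1 (d + 1),
      Bmat k x i l * γ (l + l' - 2) * Bmat k x j l')
      = ∑ l' ∈ Finset.Icc j (j + k), Bmat k x i l * γ (l + l' - 2) * Bmat k x j l' := by
    intro l
    refine (Finset.sum_subset hsubj (fun l' _ hl' => ?_)).symm
    have : Bmat k x j l' = 0 := by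
      rw [Bmat, if_neg]; simp only [Finset.mem_Icc] at hl'; omega
    simp [this]
  simp only [inner]
  -- rewrite Bmat to coefficients
  have step : (∑ l ∈ Finset.Icc i (i + k), ∑ l' ∈ Finset.Icc j (j + k),
      Bmat k x i l * γ (l + l' - 2) * Bmat k x j l')
      = ∑ a ∈ Finset.range (k + 1), ∑ b ∈ Finset.range (k + 1),
        f.coeff a * γ ((i + a) + (j + b) - 2) * f.coeff b := by
    rw [sum_Icc_shift]
    refine Finset.sum_congr rfl fun a ha => ?_
    rw [sum_Icc_shift]
    refine Finset.sum_congr rfl fun b hb => ?_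
    simp only [Finset.mem_range] at ha hb
    rw [hB i (i + a) (by omega) (by omega), hB j (j + b) (by omega) (by omega)]
    have e1 : i + a - i = a := by omega
    have e2 : j + b - j = b := by omega
    rw [e1, e2]
  rw [step]
  -- reflect RHS index and match
  rw [← Finset.sum_range_reflect]
  refine Finset.sum_congr rfl fun a ha => ?_
  simp only [Finset.mem_range] at ha
  have ha' : a ≤ k := by omega
  have h4 : k + 1 - 1 - a = k - a := by omega
  have hcr : (-1 : ℝ) ^ a * esymm k a x = f.coeff (k - a) := by
    rw [hcoeff (k - a) (by omega), Nat.sub_sub_self ha']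
  rw [h4, hloc, hcr, Finset.mul_sum]
  refine Finset.sum_congr rfl fun b hb => ?_
  have h5 : i + (k - a) + (j + b) - 2 = k - a + b + (i + j - 2) := by omega
  rw [h5]; ring
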